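/- arXiv:1309.3796 — 3 statements merged into one kernel-verified Lean document; each statement's English description precedes it below -/
import Mathlib

section
/- Let A be a unital ring, e ∈ A an idempotent, and M a right A-module. If Me is a simple right eAe-module and Me generates M as an A-module, then M has a unique maximal proper submodule, hence a unique simple quotient. -/
/-!
STATEMENT 4: Let `A` be a unital ring, `e` an idempotent, and `M` a right `A`-module.
If `Me` is a simple right `eAe`-module and `Me` generates `M` as an `A`-module, then `M`
has a unique maximal proper submodule (hence a unique simple quotient).
Right modules over `A` are formalized as left modules over `Aᵐᵒᵖ`.
-/

open MulOpposite


universe u v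

variable {A : Type u} [Ring A]

private lemma eMulMul {e x : A} (he : e * e = e) (hx : e * x * e = x) : e * x = x := by
  conv_lhs => rw [← hx]
  rw [← mul_assoc, ← mul_assoc, he]
  exact hx

private lemma mulMulE {e x : A} (he : e * e = e) (hx : e * x * e = x) : x * e = x := by
  conv_lhs => rw [← hx]
  rw [mul_assoc, he]
  exact hx

/-- The corner `eAe` of a ring `A` at an idempotent `e`, realized as the
nonunital subring of elements `x` with `e * x * e = x`. -/
def cornerSubring (e : A) (he : e * e = e) : NonUnitalSubring A where
  carrier := {x | e * x * e = x}
  add_mem' := by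
    intro a b ha hb
    show e * (a + b) * e = a + b
    rw [mul_add, add_mul, ha, hb]
  zero_mem' := by show e * 0 * e = 0; simp
  neg_mem' := by
    intro a ha
    show e * (-a) * e = -a
    rw [mul_neg, neg_mul, ha]
  mul_mem' := by
    intro a b ha hb
    show e * (a * b) * e = a * b
    have ha' : e * a = a := eMulMul he ha
    have hb' : b * e = b := mulMulE he hb
    rw [← mul_assoc e a b, ha', mul_assoc, hb']

instance cornerOne (e : A) (he : e * e = e) : One (cornerSubring e he) :=
  ⟨⟨e, show e * e * e = e by rw [he, he]⟩⟩

/-- `eAe` is a unital ring with unit `e`. -/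
instance cornerRing (e : A) (he : e * e = e) : Ring (cornerSubring e he) :=
  { (inferInstanceAs (NonUnitalRing (cornerSubring e he)) : NonUnitalRing (cornerSubring e he)), cornerOne e he with
    one_mul := fun x => Subtype.ext (eMulMul he x.2)
    mul_one := fun x => Subtype.ext (mulMulE he x.2) }

/-- For a right `A`-module `M` (a left `Aᵐᵒᵖ`-module), the subset `Me`,
realized as the additive subgroup of elements fixed by the right action of `e`. -/
def cornerSet (e : A) (M : Type v) [AddCommGroup M] [Module Aᵐᵒᵖ M] : AddSubgroup M where
  carrier := {m | op e • m = m}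
  add_mem' := by
    intro a b ha hb
    show op e • (a + b) = a + b
    rw [smul_add]
    simp only [Set.mem_setOf_eq] at ha hb
    rw [ha, hb]
  zero_mem' := smul_zero _
  neg_mem' := by
    intro a ha
    show op e • (-a) = -a
    simp only [Set.mem_setOf_eq] at ha
    rw [smul_neg, ha]

instance cornerSetSMul (e : A) (he : e * e = e) (M : Type v) [AddCommGroup M]
    [Module Aᵐᵒᵖ M] : SMul (cornerSubring e he)ᵐᵒᵖ (cornerSet e M) :=
  ⟨fun r m => ⟨op (r.unop : A) • (m : M), by
    show op e • (op (r.unop : A) • (m : M)) = op (r.unop : A) • (m : M)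
    rw [← mul_smul, ← op_mul, mulMulE he r.unop.2]⟩⟩

/-- `Me` is a right module over the corner ring `eAe`. -/
instance cornerSetModule (e : A) (he : e * e = e) (M : Type v) [AddCommGroup M]
    [Module Aᵐᵒᵖ M] : Module (cornerSubring e he)ᵐᵒᵖ (cornerSet e M) where
  smul := (· • ·)
  one_smul m := Subtype.ext (show op e • (m : M) = m from m.2)
  mul_smul r s m := Subtype.ext <| by
    show op (((r * s).unop : A)) • (m : M) = op ((r.unop : A)) • (op ((s.unop : A)) • (m : M))
    have h : (((r * s).unop : A)) = ((s.unop : A)) * ((r.unop : A)) := rfl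
    rw [h, op_mul, mul_smul]
  smul_zero r := Subtype.ext (smul_zero _)
  smul_add r m m' := Subtype.ext (smul_add _ _ _)
  add_smul r s m := Subtype.ext <| by
    show op (((r + s).unop : A)) • (m : M)
        = op ((r.unop : A)) • (m : M) + op ((s.unop : A)) • (m : M)
    have h : (((r + s).unop : A)) = ((r.unop : A)) + ((s.unop : A)) := rfl
    rw [h, MulOpposite.op_add, add_smul]
  zero_smul m := Subtype.ext <| by
    show op (((0 : (cornerSubring e he)ᵐᵒᵖ).unop : A)) • (m : M) = 0
    simp


theorem unique_maximal_submodule_of_corner_simple (e : A) (he : e * e = e)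
    (M : Type u) [AddCommGroup M] [Module Aᵐᵒᵖ M]
    (hsimple : IsSimpleModule (cornerSubring e he)ᵐᵒᵖ (cornerSet e M))
    (hgen : Submodule.span Aᵐᵒᵖ ((cornerSet e M : Set M)) = ⊤) :
    ∃! N : Submodule Aᵐᵒᵖ M, N ≠ ⊤ ∧ ∀ N' : Submodule Aᵐᵒᵖ M, N' ≠ ⊤ → N' ≤ N := by

  classical
  have hmemCorner : ∀ x : M, x ∈ cornerSet e M ↔ op e • x = x := fun x => Iff.rfl
  -- The candidate maximal submodule
  set N : Submodule Aᵐᵒᵖ M :=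
    { carrier := {m | ∀ a : A, op e • op a • m = 0}
      add_mem' := by
        intro x y hx hy a
        rw [smul_add, smul_add, hx a, hy a, add_zero]
      zero_mem' := by intro a; simp
      smul_mem' := by
        intro r m hm a
        have h1 : op a • r • m = op (r.unop * a) • m := by
          rw [← mul_smul, op_mul, op_unop]
        rw [h1]
        exact hm (r.unop * a) } with hNdef
  -- Any proper submodule is contained in N
  have hle : ∀ N' : Submodule Aᵐᵒᵖ M, N' ≠ ⊤ → N' ≤ N := by
    intro N' hN' m hm
    -- N' ∩ Me as an eAe-submodule of Me
    set K : Submodule (cornerSubring e he)ᵐᵒᵖ (cornerSet e M) :=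
      { carrier := {x | (x : M) ∈ N'}
        add_mem' := fun hx hy => N'.add_mem hx hy
        zero_mem' := N'.zero_mem
        smul_mem' := by
          intro r x hx
          show ((r • x : cornerSet e M) : M) ∈ N'
          have : ((r • x : cornerSet e M) : M) = op (r.unop : A) • (x : M) := rfl
          rw [this]
          exact N'.smul_mem _ hx } with hKdef
    have hKbot : K = ⊥ := by
      rcases hsimple.1.eq_bot_or_eq_top K with h | h
      · exact h
      · exfalso
        apply hN'
        rw [eq_top_iff, ← hgen, Submodule.span_le]
        intro x hx
        have : (⟨x, hx⟩ : cornerSet e M) ∈ K := h ▸ Submodule.mem_top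
        exact this
    intro a
    have hy : op e • op a • m ∈ cornerSet e M := by
      rw [hmemCorner, ← mul_smul, ← op_mul, he]
    have hyN' : op e • op a • m ∈ N' := N'.smul_mem _ (N'.smul_mem _ hm)
    have : (⟨op e • op a • m, hy⟩ : cornerSet e M) ∈ K := hyN'
    rw [hKbot, Submodule.mem_bot] at this
    exact congrArg Subtype.val this
  -- N is proper
  have hNne : N ≠ ⊤ := by
    intro h
    haveI : IsSimpleModule (cornerSubring e he)ᵐᵒᵖ (cornerSet e M) := hsimple
    haveI := IsSimpleModule.nontrivial (cornerSubring e he)ᵐᵒᵖ (cornerSet e M)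
    obtain ⟨x, hx⟩ := exists_ne (0 : cornerSet e M)
    have hxN : (x : M) ∈ N := h ▸ Submodule.mem_top
    have := hxN 1
    rw [op_one, one_smul] at this
    have hxe : op e • (x : M) = (x : M) := x.2
    rw [hxe] at this
    exact hx (Subtype.ext this)
  refine ⟨N, ⟨hNne, hle⟩, ?_⟩
  intro N' ⟨hN'ne, hN'le⟩
  exact le_antisymm (hle N' hN'ne) (hN'le N hNne)
end

section
/- Let A be a ring and S_1, …, S_n right A-modules with the following property: for each i there is a short exact sequence 0 → K_i → P_i → S_i → 0 with P_i projective and with K_i admitting a finite filtration whose successive quotients are each isomorphic to some S_j with j > i. Then every S_i has finite projective dimension. -/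
/-!
STATEMENT 6: Let `S 1, …, S n` be modules such that each `S i` fits in a short exact
sequence `0 → K i → P i → S i → 0` with `P i` projective and `K i` admitting a finite
filtration whose successive quotients are isomorphic to modules `S j` with `j > i`.
Then every `S i` has finite projective dimension.
-/

universe u v

/-- `ProjDimLE R n M` says that the `R`-module `M` has projective dimension at most `n`. -/
def ProjDimLE (R : Type u) [Ring R] : (n : ℕ) → (M : Type v) → [AddCommGroup M] → [Module R M] → Prop
  | 0, M, _, _ => Module.Projective R M
  | n + 1, M, _, _ =>
    ∀ (P : Type v) (_ : AddCommGroup P) (_ : Module R P), Module.Projective R P →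
      ∀ f : P →ₗ[R] M, Function.Surjective f → ProjDimLE R n (LinearMap.ker f)


section Aux
variable {R : Type u} [Ring R]

theorem split_equiv {X Q : Type v} [AddCommGroup X] [Module R X] [AddCommGroup Q] [Module R Q]
    (hQ : Module.Projective R Q) (π : X →ₗ[R] Q) (hπ : Function.Surjective π) :
    Nonempty (X ≃ₗ[R] (↥(LinearMap.ker π) × Q)) := by
  obtain ⟨s, hs⟩ := Module.projective_lifting_property π LinearMap.id hπ
  have hsx : ∀ y, π (s y) = y := fun y => congrArg (· y) (congrArg DFunLike.coe hs)
  have hmem : ∀ x : X, x - s (π x) ∈ LinearMap.ker π := by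
    intro x; simp [LinearMap.mem_ker, map_sub, hsx]
  refine ⟨LinearEquiv.ofLinear
    (LinearMap.prod ((LinearMap.id - s ∘ₗ π).codRestrict (LinearMap.ker π) hmem) π)
    ((LinearMap.ker π).subtype ∘ₗ LinearMap.fst R _ _ + s ∘ₗ LinearMap.snd R _ _) ?_ ?_⟩
  · apply LinearMap.ext; rintro ⟨⟨x, hx⟩, q⟩
    have hx' : π x = 0 := hx
    refine Prod.ext (Subtype.ext ?_) ?_ <;>
      simp [LinearMap.codRestrict, hsx, hx', map_add]
  · apply LinearMap.ext; intro x
    simp [LinearMap.codRestrict, map_sub, hsx]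

theorem schanuel {M P Q : Type v} [AddCommGroup M] [Module R M] [AddCommGroup P] [Module R P]
    [AddCommGroup Q] [Module R Q] (hP : Module.Projective R P) (hQ : Module.Projective R Q)
    (f : P →ₗ[R] M) (g : Q →ₗ[R] M) (hf : Function.Surjective f) (hg : Function.Surjective g) :
    Nonempty ((↥(LinearMap.ker f) × Q) ≃ₗ[R] (↥(LinearMap.ker g) × P)) := by
  set φ : P × Q →ₗ[R] M := f ∘ₗ LinearMap.fst R P Q - g ∘ₗ LinearMap.snd R P Q with hφ
  set T := LinearMap.ker φ with hT
  have hmemT : ∀ x : P × Q, x ∈ T ↔ f x.1 = g x.2 := by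
    intro x; simp [hT, hφ, LinearMap.mem_ker, sub_eq_zero]
  -- projections
  set π₁ : T →ₗ[R] P := LinearMap.fst R P Q ∘ₗ T.subtype with hπ₁
  set π₂ : T →ₗ[R] Q := LinearMap.snd R P Q ∘ₗ T.subtype with hπ₂
  have hπ₁s : Function.Surjective π₁ := by
    intro a
    obtain ⟨b, hb⟩ := hg (f a)
    exact ⟨⟨(a, b), (hmemT _).2 hb.symm⟩, rfl⟩
  have hπ₂s : Function.Surjective π₂ := by
    intro b
    obtain ⟨a, ha⟩ := hf (g b)
    exact ⟨⟨(a, b), (hmemT _).2 ha⟩, rfl⟩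
  -- ker π₁ ≃ ker g
  have e₁ : ↥(LinearMap.ker π₁) ≃ₗ[R] ↥(LinearMap.ker g) := by
    refine
      { toFun := fun x => ⟨(x : T).1.2, ?_⟩
        invFun := fun y => ⟨⟨(0, (y : Q)), ?_⟩, ?_⟩
        map_add' := fun a b => rfl
        map_smul' := fun c a => rfl
        left_inv := ?_
        right_inv := ?_ }
    · have hx1 : ((x : T) : P × Q).1 = 0 := x.2
      have := (hmemT (x : T)).1 (x : T).2
      rw [hx1, map_zero] at this
      exact this.symm
    · exact (hmemT _).2 (by simpa using y.2.symm)
    · simp [LinearMap.mem_ker, hπ₁]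
    · rintro ⟨⟨⟨a, b⟩, hab⟩, h0⟩
      have ha : a = 0 := h0
      subst ha; rfl
    · rintro ⟨b, hb⟩; rfl
  have e₂ : ↥(LinearMap.ker π₂) ≃ₗ[R] ↥(LinearMap.ker f) := by
    refine
      { toFun := fun x => ⟨(x : T).1.1, ?_⟩
        invFun := fun y => ⟨⟨((y : P), 0), ?_⟩, ?_⟩
        map_add' := fun a b => rfl
        map_smul' := fun c a => rfl
        left_inv := ?_
        right_inv := ?_ }
    · have hx2 : ((x : T) : P × Q).2 = 0 := x.2
      have := (hmemT (x : T)).1 (x : T).2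
      rw [hx2, map_zero] at this
      exact this
    · exact (hmemT _).2 (by simpa using y.2)
    · simp [LinearMap.mem_ker, hπ₂]
    · rintro ⟨⟨⟨a, b⟩, hab⟩, h0⟩
      have hb : b = 0 := h0
      subst hb; rfl
    · rintro ⟨b, hb⟩; rfl
  obtain ⟨u₁⟩ := split_equiv hP π₁ hπ₁s
  obtain ⟨u₂⟩ := split_equiv hQ π₂ hπ₂s
  exact ⟨(LinearEquiv.prodCongr e₂.symm (LinearEquiv.refl R Q)).trans <|
    u₂.symm.trans <| u₁.trans <| LinearEquiv.prodCongr e₁ (LinearEquiv.refl R P)⟩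

def IterCover (R : Type u) [Ring R] : (d : ℕ) → (M : Type v) → [AddCommGroup M] → [Module R M] → Prop
  | 0, M, _, _ => Module.Projective R M
  | d + 1, M, _, _ => ∃ (Q : Type v) (_ : AddCommGroup Q) (_ : Module R Q),
      Module.Projective R Q ∧ ∃ f : Q →ₗ[R] M, Function.Surjective f ∧
        IterCover R d (LinearMap.ker f)

theorem iterCover_zero {M : Type v} [AddCommGroup M] [Module R M] :
    IterCover R 0 M ↔ Module.Projective R M := by simp only [IterCover]

theorem iterCover_succ_iff {M : Type v} [AddCommGroup M] [Module R M] {d : ℕ} :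
    IterCover R (d + 1) M ↔ ∃ (Q : Type v) (_ : AddCommGroup Q) (_ : Module R Q),
      Module.Projective R Q ∧ ∃ f : Q →ₗ[R] M, Function.Surjective f ∧
        IterCover R d (LinearMap.ker f) := by simp only [IterCover]

theorem IterCover_of_equiv {M N : Type v} [AddCommGroup M] [Module R M] [AddCommGroup N]
    [Module R N] (e : M ≃ₗ[R] N) {d : ℕ} (h : IterCover R d M) : IterCover R d N := by
  cases d with
  | zero =>
    rw [iterCover_zero] at h ⊢
    exact Module.Projective.of_equiv e
  | succ d =>
    rw [iterCover_succ_iff] at h ⊢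
    obtain ⟨Q, _, _, hQ, f, hf, hk⟩ := h
    refine ⟨Q, ‹_›, ‹_›, hQ, e.toLinearMap ∘ₗ f, e.surjective.comp hf, ?_⟩
    have hker : LinearMap.ker (e.toLinearMap ∘ₗ f) = LinearMap.ker f := by ext x; simp
    rw [hker]
    exact hk

theorem IterCover_succ {M : Type v} [AddCommGroup M] [Module R M] {d : ℕ}
    (h : IterCover R d M) : IterCover R (d + 1) M := by
  induction d generalizing M with
  | zero =>
    rw [iterCover_zero] at h
    rw [iterCover_succ_iff]
    refine ⟨M, ‹_›, ‹_›, h, LinearMap.id, Function.surjective_id, ?_⟩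
    rw [iterCover_zero]
    have : Subsingleton ↥(LinearMap.ker (LinearMap.id : M →ₗ[R] M)) := by
      rw [LinearMap.ker_id]; infer_instance
    exact Module.Projective.of_free
  | succ d ih =>
    rw [iterCover_succ_iff] at h ⊢
    obtain ⟨Q, _, _, hQ, f, hf, hk⟩ := h
    exact ⟨Q, ‹_›, ‹_›, hQ, f, hf, ih hk⟩

theorem IterCover_mono {M : Type v} [AddCommGroup M] [Module R M] {d d' : ℕ} (hdd : d ≤ d')
    (h : IterCover R d M) : IterCover R d' M := by
  induction hdd with
  | refl => exact h
  | step _ ih => exact IterCover_succ ih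

def prodSubsingletonEquiv (M N : Type v) [AddCommGroup M] [Module R M] [AddCommGroup N]
    [Module R N] [Subsingleton N] : (M × N) ≃ₗ[R] M where
  toFun := fun x => x.1
  invFun := fun m => (m, 0)
  map_add' := fun _ _ => rfl
  map_smul' := fun _ _ => rfl
  left_inv := fun x => by ext <;> simp [Subsingleton.elim (0 : N) x.2]
  right_inv := fun m => rfl

theorem ker_fst_comp {W X Q : Type v} [AddCommGroup W] [Module R W] [AddCommGroup X] [Module R X]
    [AddCommGroup Q] [Module R Q] (hQ : Module.Projective R Q) (h : W →ₗ[R] (X × Q))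
    (hs : Function.Surjective h) :
    Nonempty (↥(LinearMap.ker (LinearMap.fst R X Q ∘ₗ h)) ≃ₗ[R] (↥(LinearMap.ker h) × Q)) := by
  set k := LinearMap.fst R X Q ∘ₗ h with hk
  set π : ↥(LinearMap.ker k) →ₗ[R] Q := LinearMap.snd R X Q ∘ₗ h ∘ₗ (LinearMap.ker k).subtype
    with hπ
  have hπs : Function.Surjective π := by
    intro q
    obtain ⟨w, hw⟩ := hs (0, q)
    refine ⟨⟨w, ?_⟩, ?_⟩
    · simp [hk, LinearMap.mem_ker, hw]
    · simp [hπ, hw]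
  obtain ⟨u⟩ := split_equiv hQ π hπs
  have hkerπ : LinearMap.ker π = (LinearMap.ker h).comap (LinearMap.ker k).subtype := by
    ext x
    have hx : (h x.1).1 = 0 := x.2
    simp [hπ, LinearMap.mem_ker, Prod.ext_iff, hx]
  have hle : LinearMap.ker h ≤ LinearMap.ker k := fun x hx => by
    simp [hk, LinearMap.mem_ker] at hx ⊢; simp [hx, LinearMap.mem_ker.1 hx]
  refine ⟨u.trans (LinearEquiv.prodCongr ?_ (LinearEquiv.refl R Q))⟩
  rw [hkerπ]
  exact Submodule.comapSubtypeEquivOfLe hle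

theorem IterCover_stable {d : ℕ} {X Y Q P : Type v}
    [AddCommGroup X] [Module R X] [AddCommGroup Y] [Module R Y]
    [AddCommGroup Q] [Module R Q] [AddCommGroup P] [Module R P]
    (hQ : Module.Projective R Q) (hP : Module.Projective R P)
    (e : (X × Q) ≃ₗ[R] (Y × P)) (h : IterCover R d Y) : IterCover R d X := by
  induction d generalizing X Y Q P with
  | zero =>
    rw [iterCover_zero] at h ⊢
    haveI := h; haveI := hP
    haveI : Module.Projective R (X × Q) := Module.Projective.of_equiv e.symm
    exact Module.Projective.of_split (LinearMap.inl R X Q) (LinearMap.fst R X Q) (by ext x <;> simp)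
  | succ d ih =>
    rw [iterCover_succ_iff] at h ⊢
    obtain ⟨G, _, _, hG, g, hg, hk⟩ := h
    haveI := hG; haveI := hP
    set h' : (G × P) →ₗ[R] (X × Q) := e.symm.toLinearMap ∘ₗ (g.prodMap LinearMap.id) with hh'
    have hh's : Function.Surjective h' := by
      have : Function.Surjective (g.prodMap (LinearMap.id : P →ₗ[R] P)) :=
        hg.prodMap Function.surjective_id
      exact e.symm.surjective.comp this
    set k : (G × P) →ₗ[R] X := LinearMap.fst R X Q ∘ₗ h' with hkdef
    have hks : Function.Surjective k := by
      have hfst : Function.Surjective (LinearMap.fst R X Q) := fun x => ⟨(x, 0), rfl⟩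
      exact hfst.comp hh's
    refine ⟨G × P, inferInstance, inferInstance, inferInstance, k, hks, ?_⟩
    -- identify ker k
    obtain ⟨u⟩ := ker_fst_comp hQ h' hh's
    have hker' : LinearMap.ker h' = LinearMap.ker (g.prodMap (LinearMap.id : P →ₗ[R] P)) := by
      ext x; simp [hh']
    have hmem : ∀ z : G × P, z ∈ LinearMap.ker (g.prodMap (LinearMap.id : P →ₗ[R] P)) ↔
        g z.1 = 0 ∧ z.2 = 0 := by
      intro z; simp [LinearMap.mem_ker, Prod.ext_iff]
    have e₂ : ↥(LinearMap.ker (g.prodMap (LinearMap.id : P →ₗ[R] P))) ≃ₗ[R]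
        ↥(LinearMap.ker g) :=
      { toFun := fun x => ⟨(x : G × P).1, LinearMap.mem_ker.2 ((hmem _).1 x.2).1⟩
        invFun := fun y => ⟨((y : G), 0), (hmem _).2 ⟨LinearMap.mem_ker.1 y.2, rfl⟩⟩
        map_add' := fun _ _ => rfl
        map_smul' := fun _ _ => rfl
        left_inv := by
          rintro ⟨⟨a, b⟩, hab⟩
          exact Subtype.ext (Prod.ext rfl ((hmem _).1 hab).2.symm)
        right_inv := by rintro ⟨a, ha⟩; rfl }
    -- IterCover d (ker g × Q) from IterCover d (ker g) via IH and PUnit trick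
    have hPU : Module.Projective R PUnit.{v + 1} := Module.Projective.of_free
    have epu : ((↥(LinearMap.ker g) × Q) × PUnit.{v + 1}) ≃ₗ[R] (↥(LinearMap.ker g) × Q) :=
      prodSubsingletonEquiv _ _
    have hkq : IterCover R d (↥(LinearMap.ker g) × Q) := ih hPU hQ epu hk
    -- transfer along u, hker', e₂
    have efin : (↥(LinearMap.ker g) × Q) ≃ₗ[R] ↥(LinearMap.ker k) := by
      refine (LinearEquiv.prodCongr ?_ (LinearEquiv.refl R Q)).trans u.symm
      rw [hker']
      exact e₂.symm
    exact IterCover_of_equiv efin hkq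

theorem IterCover_ext {d : ℕ} {B : Type v} [AddCommGroup B] [Module R B] (A : Submodule R B)
    (hA : IterCover R d ↥A) (hC : IterCover R d (B ⧸ A)) : IterCover R d B := by
  induction d generalizing B with
  | zero =>
    rw [iterCover_zero] at hA hC ⊢
    haveI := hA; haveI := hC
    obtain ⟨u⟩ := split_equiv hC A.mkQ (Submodule.mkQ_surjective A)
    haveI h1 : Module.Projective R ↥(LinearMap.ker A.mkQ) := by
      rw [Submodule.ker_mkQ]; exact hA
    exact Module.Projective.of_equiv u.symm
  | succ d ih =>
    rw [iterCover_succ_iff] at hA hC ⊢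
    obtain ⟨FA, _, _, hFA, qA, hqA, hkA⟩ := hA
    obtain ⟨FC, _, _, hFC, qC, hqC, hkC⟩ := hC
    haveI := hFA; haveI := hFC
    obtain ⟨h, hh⟩ := Module.projective_lifting_property A.mkQ qC (Submodule.mkQ_surjective A)
    have hhx : ∀ y, A.mkQ (h y) = qC y := fun y => congrArg (· y) (congrArg DFunLike.coe hh)
    set f : (FA × FC) →ₗ[R] B :=
      A.subtype ∘ₗ qA ∘ₗ LinearMap.fst R FA FC + h ∘ₗ LinearMap.snd R FA FC with hfdef
    have hfapp : ∀ z : FA × FC, f z = (qA z.1 : B) + h z.2 := fun z => rfl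
    have hfs : Function.Surjective f := by
      intro b
      obtain ⟨y, hy⟩ := hqC (A.mkQ b)
      have hmem : b - h y ∈ A := by
        rw [← Submodule.ker_mkQ A, LinearMap.mem_ker, map_sub, hhx, hy, sub_self]
      obtain ⟨x, hx⟩ := hqA ⟨b - h y, hmem⟩
      refine ⟨(x, y), ?_⟩
      rw [hfapp, hx]
      simp
    have hψmem : ∀ w : ↥(LinearMap.ker f), (LinearMap.snd R FA FC ∘ₗ
        (LinearMap.ker f).subtype) w ∈ LinearMap.ker qC := by
      rintro ⟨⟨x, y⟩, hw⟩
      rw [LinearMap.mem_ker] at hw ⊢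
      rw [hfapp] at hw
      have h1 : A.mkQ ((qA x : B)) = 0 := by
        rw [Submodule.mkQ_apply]
        exact (Submodule.Quotient.mk_eq_zero A).2 (qA x).2
      have h2 : A.mkQ ((qA x : B) + h y) = 0 := by rw [hw, map_zero]
      rw [map_add, h1, zero_add, hhx] at h2
      exact h2
    set ψ : ↥(LinearMap.ker f) →ₗ[R] ↥(LinearMap.ker qC) :=
      LinearMap.codRestrict (LinearMap.ker qC)
        (LinearMap.snd R FA FC ∘ₗ (LinearMap.ker f).subtype) hψmem with hψdef
    have hψs : Function.Surjective ψ := by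
      rintro ⟨y, hy⟩
      have hy0 : qC y = 0 := hy
      have hmem : h y ∈ A := by
        rw [← Submodule.ker_mkQ A, LinearMap.mem_ker, hhx, hy0]
      obtain ⟨x, hx⟩ := hqA ⟨-h y, neg_mem hmem⟩
      have hker : (x, y) ∈ LinearMap.ker f := by
        rw [LinearMap.mem_ker, hfapp, hx]
        simp
      exact ⟨⟨(x, y), hker⟩, Subtype.ext rfl⟩
    have hkerψ : ∀ w : ↥(LinearMap.ker f), w ∈ LinearMap.ker ψ ↔ (w : FA × FC).2 = 0 := by
      intro w
      rw [LinearMap.mem_ker, Subtype.ext_iff]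
      exact Iff.rfl
    have eψ : ↥(LinearMap.ker ψ) ≃ₗ[R] ↥(LinearMap.ker qA) :=
      { toFun := fun w => ⟨((w : ↥(LinearMap.ker f)) : FA × FC).1, by
          have h2 : ((w : ↥(LinearMap.ker f)) : FA × FC).2 = 0 := (hkerψ w.1).1 w.2
          have h0 : f ((w : ↥(LinearMap.ker f)) : FA × FC) = 0 :=
            LinearMap.mem_ker.1 (w : ↥(LinearMap.ker f)).2
          rw [hfapp, h2, map_zero, add_zero] at h0
          exact LinearMap.mem_ker.2 ((Submodule.coe_eq_zero).1 h0)⟩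
        invFun := fun x => ⟨⟨((x : FA), 0), by
            have hx0 : qA (x : FA) = 0 := x.2
            rw [LinearMap.mem_ker, hfapp]
            simp [hx0]⟩, (hkerψ _).2 rfl⟩
        map_add' := fun _ _ => rfl
        map_smul' := fun _ _ => rfl
        left_inv := by
          rintro ⟨⟨⟨a, b⟩, hab⟩, h0⟩
          have hb : b = 0 := (hkerψ _).1 h0
          subst hb; rfl
        right_inv := by rintro ⟨a, ha⟩; rfl }
    have equot : (↥(LinearMap.ker f) ⧸ LinearMap.ker ψ) ≃ₗ[R] ↥(LinearMap.ker qC) :=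
      ψ.quotKerEquivOfSurjective hψs
    have hkf : IterCover R d ↥(LinearMap.ker f) :=
      ih (LinearMap.ker ψ) (IterCover_of_equiv eψ.symm hkA) (IterCover_of_equiv equot.symm hkC)
    exact ⟨FA × FC, inferInstance, inferInstance, inferInstance, f, hfs, hkf⟩

theorem projDimLE_zero_iff {M : Type v} [AddCommGroup M] [Module R M] :
    ProjDimLE R 0 M ↔ Module.Projective R M := by simp only [ProjDimLE]

theorem projDimLE_succ_iff {M : Type v} [AddCommGroup M] [Module R M] {d : ℕ} :
    ProjDimLE R (d + 1) M ↔
      ∀ (P : Type v) (_ : AddCommGroup P) (_ : Module R P), Module.Projective R P →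
        ∀ f : P →ₗ[R] M, Function.Surjective f → ProjDimLE R d (LinearMap.ker f) := by
  simp only [ProjDimLE]

theorem projDimLE_of_iterCover {d : ℕ} {M : Type v} [AddCommGroup M] [Module R M]
    (h : IterCover R d M) : ProjDimLE R d M := by
  induction d generalizing M with
  | zero =>
    rw [iterCover_zero] at h
    rw [projDimLE_zero_iff]
    exact h
  | succ d ih =>
    rw [iterCover_succ_iff] at h
    obtain ⟨Q, _, _, hQ, g, hg, hkg⟩ := h
    rw [projDimLE_succ_iff]
    intro W _ _ hW f hf
    obtain ⟨e⟩ := schanuel hW hQ f g hf hg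
    exact ih (IterCover_stable hQ hW e hkg)

end Aux

theorem finite_projDim_of_stratification
    (R : Type u) [Ring R] (n : ℕ)
    (S : Fin n → Type v) [∀ i, AddCommGroup (S i)] [∀ i, Module R (S i)]
    (P : Fin n → Type v) [∀ i, AddCommGroup (P i)] [∀ i, Module R (P i)]
    (hP : ∀ i, Module.Projective R (P i))
    (p : ∀ i, P i →ₗ[R] S i) (hp : ∀ i, Function.Surjective (p i))
    (hfilt : ∀ i : Fin n, ∃ (r : ℕ) (F : Fin (r + 1) → Submodule R (LinearMap.ker (p i))),
      F 0 = ⊥ ∧ F (Fin.last r) = ⊤ ∧ (∀ t : Fin r, F t.castSucc ≤ F t.succ) ∧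
        ∀ t : Fin r, ∃ j : Fin n, i < j ∧
          Nonempty (((F t.succ) ⧸ (F t.castSucc).comap (F t.succ).subtype) ≃ₗ[R] S j)) :
    ∀ i, ∃ d : ℕ, ProjDimLE R d (S i) := by
  suffices key : ∀ i, ∃ d : ℕ, IterCover R d (S i) by
    intro i
    obtain ⟨d, hd⟩ := key i
    exact ⟨d, projDimLE_of_iterCover hd⟩
  have main : ∀ m : ℕ, ∀ i : Fin n, n - i.val ≤ m → ∃ d : ℕ, IterCover R d (S i) := by
    intro m
    induction m with
    | zero =>
      intro i hi
      have := i.isLt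
      omega
    | succ m ihm =>
      intro i hi
      obtain ⟨r, F, hF0, hFlast, hFmono, hFq⟩ := hfilt i
      choose j hij hq using hFq
      have hS : ∀ t : Fin r, ∃ d, IterCover R d (S (j t)) := by
        intro t
        refine ihm (j t) ?_
        have h1 : i.val < (j t).val := hij t
        have := (j t).isLt
        omega
      choose dd hdd using hS
      set D := Finset.univ.sup dd with hD
      have hDt : ∀ t, dd t ≤ D := fun t => Finset.le_sup (Finset.mem_univ t)
      have hquot : ∀ t : Fin r,
          IterCover R D ((F t.succ) ⧸ (F t.castSucc).comap (F t.succ).subtype) := by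
        intro t
        obtain ⟨e⟩ := hq t
        exact IterCover_of_equiv e.symm (IterCover_mono (hDt t) (hdd t))
      have hstep : ∀ t : Fin (r + 1), IterCover R D ↥(F t) := by
        intro t
        induction t using Fin.induction with
        | zero =>
          rw [hF0]
          apply IterCover_mono (Nat.zero_le D)
          rw [iterCover_zero]
          exact Module.Projective.of_free
        | succ t ihp =>
          apply IterCover_ext ((F t.castSucc).comap (F t.succ).subtype)
          · exact IterCover_of_equiv (Submodule.comapSubtypeEquivOfLe (hFmono t)).symm ihp
          · exact hquot t
      have hlast := hstep (Fin.last r)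
      rw [hFlast] at hlast
      have hker : IterCover R D ↥(LinearMap.ker (p i)) :=
        IterCover_of_equiv (Submodule.topEquiv) hlast
      exact ⟨D + 1, iterCover_succ_iff.2
        ⟨P i, inferInstance, inferInstance, hP i, p i, hp i, hker⟩⟩
  intro i
  exact main n i (by omega)
end

section
/- Let R = k[x_1,…,x_n] over a commutative ring k, let s_i denote the algebra automorphism swapping x_i and x_{i+1}, and define the Demazure operator ∂_i(f) = (f − s_i f)/(x_i − x_{i+1}). Then ∂_i is a well-defined k-linear endomorphism of R and the following hold: (1) ∂_i² = 0; (2) ∂_i ∂_j = ∂_j ∂_i whenever |i − j| > 1; (3) ∂_i ∂_{i+1} ∂_i = ∂_{i+1} ∂_i ∂_{i+1}; (4) ∂_i(x_i · f) − x_{i+1} · ∂_i(f) = f for all f. -/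
/-!
STATEMENT 7: Demazure operators `∂ᵢ(f) = (f − sᵢ f)/(xᵢ − xᵢ₊₁)` on `R = k[x₁,…,xₙ]`
are well-defined `k`-linear endomorphisms (existence and uniqueness of a linear map `D`
with `(xᵢ − xᵢ₊₁) · D f = f − sᵢ f`), and they satisfy:
(1) `∂ᵢ² = 0`; (2) `∂ᵢ∂ⱼ = ∂ⱼ∂ᵢ` for `|i − j| > 1`; (3) the braid relation
`∂ᵢ∂ᵢ₊₁∂ᵢ = ∂ᵢ₊₁∂ᵢ∂ᵢ₊₁`; (4) `∂ᵢ(xᵢ·f) − xᵢ₊₁·∂ᵢ(f) = f`.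
-/

open MvPolynomial

namespace DemazureProofAux

variable {k : Type*} [CommRing k] {n : ℕ}

lemma X_cancel (q : Fin n) {a b : MvPolynomial (Fin n) k} (h : X q * a = X q * b) : a = b := by
  have h0 : X q * (a - b) = 0 := by rw [mul_sub, h, sub_self]
  have hab : a - b = 0 := by
    ext m
    have := congrArg (coeff (Finsupp.single q 1 + m)) h0
    simpa using this
  exact sub_eq_zero.mp hab

noncomputable def φ (p q : Fin n) : MvPolynomial (Fin n) k →ₐ[k] MvPolynomial (Fin n) k :=
  aeval (fun r => if r = q then X p + X r else X r)

noncomputable def ψ (p q : Fin n) : MvPolynomial (Fin n) k →ₐ[k] MvPolynomial (Fin n) k :=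
  aeval (fun r => if r = q then X r - X p else X r)

lemma ψφ (p q : Fin n) (hpq : p ≠ q) (f : MvPolynomial (Fin n) k) : ψ p q (φ p q f) = f := by
  have : (ψ p q (k := k)).comp (φ p q) = AlgHom.id k _ := by
    apply MvPolynomial.algHom_ext
    intro r
    by_cases hr : r = q <;>
      simp [φ, ψ, hr, hpq]
  calc ψ p q (φ p q f) = ((ψ p q).comp (φ p q)) f := rfl
    _ = f := by rw [this]; rfl

lemma X_sub_X_cancel {p q : Fin n} (hpq : p ≠ q) {a b : MvPolynomial (Fin n) k}
    (h : (X p - X q) * a = (X p - X q) * b) : a = b := by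
  have key : φ p q (X p - X q) = -(X (R := k) q) := by
    have : φ (k := k) p q (X p - X q) = X p - (X p + X q) := by simp [φ, hpq]
    rw [this]; ring
  have h2 := congrArg (φ p q) h
  rw [map_mul, map_mul, key, neg_mul, neg_mul, neg_inj] at h2
  have h3 := X_cancel q h2
  have h4 := congrArg (ψ p q) h3
  rwa [ψφ p q hpq, ψφ p q hpq] at h4

lemma swap_dvd (p q : Fin n) (f : MvPolynomial (Fin n) k) :
    (X p - X q) ∣ f - rename (⇑(Equiv.swap p q)) f := by
  induction f using MvPolynomial.induction_on with
  | C a => simp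
  | add f g hf hg =>
      have : f + g - rename (⇑(Equiv.swap p q)) (f + g)
          = (f - rename (⇑(Equiv.swap p q)) f) + (g - rename (⇑(Equiv.swap p q)) g) := by
        rw [map_add]; ring
      rw [this]; exact dvd_add hf hg
  | mul_X f r hf =>
      have hXr : (X (R := k) p - X q) ∣ (X r - X (Equiv.swap p q r)) := by
        rcases eq_or_ne r p with rfl | hrp
        · rw [Equiv.swap_apply_left]
        · rcases eq_or_ne r q with rfl | hrq
          · rw [Equiv.swap_apply_right]
            exact ⟨-1, by ring⟩
          · rw [Equiv.swap_apply_of_ne_of_ne hrp hrq]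
            simp
      have : f * X r - rename (⇑(Equiv.swap p q)) (f * X r)
          = (f - rename (⇑(Equiv.swap p q)) f) * X r
            + rename (⇑(Equiv.swap p q)) f * (X r - X (Equiv.swap p q r)) := by
        rw [map_mul, rename_X]; ring
      rw [this]
      exact dvd_add (hf.mul_right _) (Dvd.dvd.mul_left hXr _)

lemma rename_swap_swap (p q : Fin n) (f : MvPolynomial (Fin n) k) :
    rename (⇑(Equiv.swap p q)) (rename (⇑(Equiv.swap p q)) f) = f := by
  rw [rename_rename]
  have : ⇑(Equiv.swap p q) ∘ ⇑(Equiv.swap p q) = id := by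
    funext x; simp [Equiv.swap_apply_self]
  rw [this, rename_id, AlgHom.id_apply]

noncomputable def DemFun (p q : Fin n) (f : MvPolynomial (Fin n) k) : MvPolynomial (Fin n) k :=
  Classical.choose (exists_eq_mul_right_of_dvd (swap_dvd p q f))

lemma DemFun_spec (p q : Fin n) (f : MvPolynomial (Fin n) k) :
    (X p - X q) * DemFun p q f = f - rename (⇑(Equiv.swap p q)) f :=
  (Classical.choose_spec (exists_eq_mul_right_of_dvd (swap_dvd p q f))).symm

/-- The Demazure operator as a linear map, via choice. -/
noncomputable def Dem (p q : Fin n) (hpq : p ≠ q) :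
    MvPolynomial (Fin n) k →ₗ[k] MvPolynomial (Fin n) k where
  toFun := DemFun p q
  map_add' := by
    intro f g
    apply X_sub_X_cancel hpq
    rw [DemFun_spec p q (f + g), map_add, mul_add, DemFun_spec, DemFun_spec]
    ring
  map_smul' := by
    intro a f
    apply X_sub_X_cancel hpq
    simp only [RingHom.id_apply]
    rw [DemFun_spec, map_smul, ← smul_sub, ← DemFun_spec p q f]
    exact (mul_smul_comm a _ _).symm

lemma Dem_spec (p q : Fin n) (hpq : p ≠ q) (f : MvPolynomial (Fin n) k) :
    (X p - X q) * Dem p q hpq f = f - rename (⇑(Equiv.swap p q)) f :=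
  DemFun_spec p q f

/-- `S (A g) = A g` for any operator satisfying the Demazure relation. -/
lemma sfix {p q : Fin n} (hpq : p ≠ q)
    (A : MvPolynomial (Fin n) k →ₗ[k] MvPolynomial (Fin n) k)
    (hA : ∀ f, (X p - X q) * A f = f - rename (⇑(Equiv.swap p q)) f)
    (g : MvPolynomial (Fin n) k) :
    rename (⇑(Equiv.swap p q)) (A g) = A g := by
  apply X_sub_X_cancel hpq
  have h1 := congrArg (rename (⇑(Equiv.swap p q))) (hA g)
  simp only [map_mul, map_sub, rename_X, Equiv.swap_apply_left, Equiv.swap_apply_right,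
    rename_swap_swap] at h1
  linear_combination -h1 - hA g

lemma master (p q r : Fin n) (hpq : p ≠ q) (hqr : q ≠ r) (hpr : p ≠ r)
    (A B : MvPolynomial (Fin n) k →ₗ[k] MvPolynomial (Fin n) k)
    (hA : ∀ f, (X p - X q) * A f = f - rename (⇑(Equiv.swap p q)) f)
    (hB : ∀ f, (X q - X r) * B f = f - rename (⇑(Equiv.swap q r)) f)
    (f : MvPolynomial (Fin n) k) :
    (X p - X q) * ((X q - X r) * ((X p - X r) * A (B (A f)))) =
      f - rename (⇑(Equiv.swap p q)) f - rename (⇑(Equiv.swap q r)) f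
        + rename (⇑(Equiv.swap q r)) (rename (⇑(Equiv.swap p q)) f)
        + rename (⇑(Equiv.swap p q)) (rename (⇑(Equiv.swap q r)) f)
        - rename (⇑(Equiv.swap p q)) (rename (⇑(Equiv.swap q r))
            (rename (⇑(Equiv.swap p q)) f)) := by
  have w1 : Equiv.swap p q p = q := Equiv.swap_apply_left p q
  have w2 : Equiv.swap p q q = p := Equiv.swap_apply_right p q
  have w3 : Equiv.swap p q r = r := Equiv.swap_apply_of_ne_of_ne (Ne.symm hpr) hqr.symm
  have w4 : Equiv.swap q r p = p := Equiv.swap_apply_of_ne_of_ne hpq hpr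
  have w5 : Equiv.swap q r q = r := Equiv.swap_apply_left q r
  have w6 : Equiv.swap q r r = q := Equiv.swap_apply_right q r
  have e3 : ∀ g, rename (⇑(Equiv.swap p q)) (A g) = A g := sfix hpq A hA
  have e1 := hA (B (A f))
  have e2 := hB (A f)
  have e7 := hA f
  have e4 : (X p - X r) * rename (⇑(Equiv.swap p q)) (B (A f))
      = A f - rename (⇑(Equiv.swap p q)) (rename (⇑(Equiv.swap q r)) (A f)) := by
    have h1 := congrArg (rename (⇑(Equiv.swap p q))) e2
    simp only [map_mul, map_sub, rename_X, w1, w2, w3] at h1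
    rw [e3 f] at h1
    linear_combination h1
  have e5 : (X p - X r) * rename (⇑(Equiv.swap q r)) (A f)
      = rename (⇑(Equiv.swap q r)) f
        - rename (⇑(Equiv.swap q r)) (rename (⇑(Equiv.swap p q)) f) := by
    have h1 := congrArg (rename (⇑(Equiv.swap q r))) e7
    simp only [map_mul, map_sub, rename_X, w4, w5, w6] at h1
    linear_combination h1
  have e6 : (X q - X r) * rename (⇑(Equiv.swap p q)) (rename (⇑(Equiv.swap q r)) (A f))
      = rename (⇑(Equiv.swap p q)) (rename (⇑(Equiv.swap q r)) f)
        - rename (⇑(Equiv.swap p q)) (rename (⇑(Equiv.swap q r))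
            (rename (⇑(Equiv.swap p q)) f)) := by
    have h1 := congrArg (rename (⇑(Equiv.swap p q)))
      (congrArg (rename (⇑(Equiv.swap q r))) e7)
    simp only [map_mul, map_sub, rename_X, w1, w2, w3, w4, w5, w6] at h1
    linear_combination h1
  have E : (X p - X q) * ((X p - X r) *
        ((X p - X q) * ((X q - X r) * ((X p - X r) * A (B (A f))))))
      = (X p - X q) * ((X p - X r) *
        (f - rename (⇑(Equiv.swap p q)) f - rename (⇑(Equiv.swap q r)) f
          + rename (⇑(Equiv.swap q r)) (rename (⇑(Equiv.swap p q)) f)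
          + rename (⇑(Equiv.swap p q)) (rename (⇑(Equiv.swap q r)) f)
          - rename (⇑(Equiv.swap p q)) (rename (⇑(Equiv.swap q r))
              (rename (⇑(Equiv.swap p q)) f)))) := by
    linear_combination ((X p - X q) * (X q - X r) * (X p - X r)^2) * e1
      + ((X p - X q) * (X p - X r)^2) * e2
      - ((X p - X q) * (X q - X r) * (X p - X r)) * e4
      + ((X p - X q) * (X p - X r)) * e7
      - ((X p - X q) * (X p - X r)) * e5
      + ((X p - X q) * (X p - X r)) * e6
  exact X_sub_X_cancel hpr (X_sub_X_cancel hpq E)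


lemma swap_comp_comm {p q p' q' : Fin n} (h1 : p' ≠ p) (h2 : p' ≠ q) (h3 : q' ≠ p)
    (h4 : q' ≠ q) (g : MvPolynomial (Fin n) k) :
    rename (⇑(Equiv.swap p q)) (rename (⇑(Equiv.swap p' q')) g)
      = rename (⇑(Equiv.swap p' q')) (rename (⇑(Equiv.swap p q)) g) := by
  rw [rename_rename, rename_rename]
  have : ⇑(Equiv.swap p q) ∘ ⇑(Equiv.swap p' q') = ⇑(Equiv.swap p' q') ∘ ⇑(Equiv.swap p q) := by
    funext x
    simp only [Function.comp_apply, Equiv.swap_apply_def]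
    split_ifs <;> simp_all
  rw [this]

/-- If `swap p q` fixes `p'` and `q'` and the two renames commute, then `rename (swap p q)`
commutes with any operator `A'` satisfying the Demazure relation for `(p', q')`. -/
lemma rename_commute_op {p q p' q' : Fin n} (hp'q' : p' ≠ q')
    (ha3 : Equiv.swap p q p' = p') (ha4 : Equiv.swap p q q' = q')
    (hcomm : ∀ g : MvPolynomial (Fin n) k,
      rename (⇑(Equiv.swap p q)) (rename (⇑(Equiv.swap p' q')) g)
        = rename (⇑(Equiv.swap p' q')) (rename (⇑(Equiv.swap p q)) g))
    (A' : MvPolynomial (Fin n) k →ₗ[k] MvPolynomial (Fin n) k)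
    (hA' : ∀ f, (X p' - X q') * A' f = f - rename (⇑(Equiv.swap p' q')) f)
    (g : MvPolynomial (Fin n) k) :
    rename (⇑(Equiv.swap p q)) (A' g) = A' (rename (⇑(Equiv.swap p q)) g) := by
  apply X_sub_X_cancel hp'q'
  have h1' := congrArg (rename (⇑(Equiv.swap p q))) (hA' g)
  simp only [map_mul, map_sub, rename_X, ha3, ha4] at h1'
  rw [hcomm g] at h1'
  have h2' := hA' (rename (⇑(Equiv.swap p q)) g)
  linear_combination h1' - h2'

lemma comm_ops {p q p' q' : Fin n} (hpq : p ≠ q) (hp'q' : p' ≠ q')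
    (h1 : p' ≠ p) (h2 : p' ≠ q) (h3 : q' ≠ p) (h4 : q' ≠ q)
    (A A' : MvPolynomial (Fin n) k →ₗ[k] MvPolynomial (Fin n) k)
    (hA : ∀ f, (X p - X q) * A f = f - rename (⇑(Equiv.swap p q)) f)
    (hA' : ∀ f, (X p' - X q') * A' f = f - rename (⇑(Equiv.swap p' q')) f)
    (f : MvPolynomial (Fin n) k) : A (A' f) = A' (A f) := by
  have ha1 : Equiv.swap p' q' p = p := Equiv.swap_apply_of_ne_of_ne h1.symm h3.symm
  have ha2 : Equiv.swap p' q' q = q := Equiv.swap_apply_of_ne_of_ne h2.symm h4.symm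
  have ha3 : Equiv.swap p q p' = p' := Equiv.swap_apply_of_ne_of_ne h1 h2
  have ha4 : Equiv.swap p q q' = q' := Equiv.swap_apply_of_ne_of_ne h3 h4
  have hcomm := fun g => swap_comp_comm (k := k) h1 h2 h3 h4 g
  have cS := rename_commute_op hp'q' ha3 ha4 hcomm A' hA'
  have cS' := rename_commute_op hpq ha1 ha2 (fun g => (hcomm g).symm) A hA
  apply X_sub_X_cancel hpq
  apply X_sub_X_cancel hp'q'
  have m1 := hA (A' f)
  have m2 := hA' f
  have m3 := cS f
  have m4 := hA' (rename (⇑(Equiv.swap p q)) f)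
  have n1 := hA' (A f)
  have n2 := hA f
  have n3 := cS' f
  have n4 := hA (rename (⇑(Equiv.swap p' q')) f)
  have hcm := hcomm f
  linear_combination (X p' - X q') * m1 + m2 - (X p' - X q') * m3 - m4
    - (X p - X q) * n1 - n2 + (X p - X q) * n3 + n4 - hcm

lemma braid_ops (p q r : Fin n) (hpq : p ≠ q) (hqr : q ≠ r) (hpr : p ≠ r)
    (A B : MvPolynomial (Fin n) k →ₗ[k] MvPolynomial (Fin n) k)
    (hA : ∀ f, (X p - X q) * A f = f - rename (⇑(Equiv.swap p q)) f)
    (hB : ∀ f, (X q - X r) * B f = f - rename (⇑(Equiv.swap q r)) f)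
    (f : MvPolynomial (Fin n) k) : A (B (A f)) = B (A (B f)) := by
  have m1 := master p q r hpq hqr hpr A B hA hB f
  have hA' : ∀ g, (X r - X q) * (-B) g = g - rename (⇑(Equiv.swap r q)) g := by
    intro g
    rw [Equiv.swap_comm r q]
    simp only [LinearMap.neg_apply]
    linear_combination hB g
  have hB' : ∀ g, (X q - X p) * (-A) g = g - rename (⇑(Equiv.swap q p)) g := by
    intro g
    rw [Equiv.swap_comm q p]
    simp only [LinearMap.neg_apply]
    linear_combination hA g
  have m2 := master r q p hqr.symm hpq.symm (Ne.symm hpr) (-B) (-A) hA' hB' f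
  rw [Equiv.swap_comm r q, Equiv.swap_comm q p] at m2
  simp only [LinearMap.neg_apply, map_neg, neg_neg] at m2
  have h1 : Equiv.swap p q * Equiv.swap q r * Equiv.swap p q = Equiv.swap p r := by
    have := Equiv.swap_mul_swap_mul_swap (x := r) (y := q) (z := p) hqr.symm (Ne.symm hpr)
    rwa [Equiv.swap_comm q p, Equiv.swap_comm r q] at this
  have h1' : Equiv.swap q r * Equiv.swap p q * Equiv.swap q r = Equiv.swap p r := by
    have := Equiv.swap_mul_swap_mul_swap (x := p) (y := q) (z := r) hpq hpr
    rwa [Equiv.swap_comm r p] at this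
  have hbraid : rename (⇑(Equiv.swap p q)) (rename (⇑(Equiv.swap q r))
        (rename (⇑(Equiv.swap p q)) f))
      = rename (⇑(Equiv.swap q r)) (rename (⇑(Equiv.swap p q))
        (rename (⇑(Equiv.swap q r)) f)) := by
    simp only [rename_rename]
    have hfun : ⇑(Equiv.swap p q) ∘ ⇑(Equiv.swap q r) ∘ ⇑(Equiv.swap p q)
        = ⇑(Equiv.swap q r) ∘ ⇑(Equiv.swap p q) ∘ ⇑(Equiv.swap q r) := by
      funext x
      have e1 := Equiv.ext_iff.mp h1 x
      have e2 := Equiv.ext_iff.mp h1' x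
      simp only [Equiv.Perm.mul_apply] at e1 e2
      simp only [Function.comp_apply]
      rw [e1, e2]
    rw [hfun]
  apply X_sub_X_cancel hpq
  apply X_sub_X_cancel hqr
  apply X_sub_X_cancel hpr
  linear_combination m1 - m2 - hbraid

end DemazureProofAux



open DemazureProofAux in
theorem demazure_operators (k : Type*) [CommRing k] (n : ℕ) :
    (∀ (i : ℕ) (hi : i + 1 < n),
        ∃! D : MvPolynomial (Fin n) k →ₗ[k] MvPolynomial (Fin n) k,
          ∀ f : MvPolynomial (Fin n) k,
            (X (⟨i, by omega⟩ : Fin n) - X (⟨i + 1, hi⟩ : Fin n)) * D f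
              = f - rename (⇑(Equiv.swap (⟨i, by omega⟩ : Fin n) (⟨i + 1, hi⟩ : Fin n))) f) ∧
      ∀ D : ∀ (i : ℕ), i + 1 < n → (MvPolynomial (Fin n) k →ₗ[k] MvPolynomial (Fin n) k),
        (∀ (i : ℕ) (hi : i + 1 < n) (f : MvPolynomial (Fin n) k),
            (X (⟨i, by omega⟩ : Fin n) - X (⟨i + 1, hi⟩ : Fin n)) * D i hi f
              = f - rename (⇑(Equiv.swap (⟨i, by omega⟩ : Fin n) (⟨i + 1, hi⟩ : Fin n))) f) →
          (∀ (i : ℕ) (hi : i + 1 < n) (f : MvPolynomial (Fin n) k),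
              D i hi (D i hi f) = 0) ∧
          (∀ (i j : ℕ) (hi : i + 1 < n) (hj : j + 1 < n), (i + 1 < j ∨ j + 1 < i) →
              ∀ f : MvPolynomial (Fin n) k, D i hi (D j hj f) = D j hj (D i hi f)) ∧
          (∀ (i : ℕ) (h2 : i + 2 < n) (f : MvPolynomial (Fin n) k),
              D i (by omega) (D (i + 1) (by omega) (D i (by omega) f))
                = D (i + 1) (by omega) (D i (by omega) (D (i + 1) (by omega) f))) ∧
          (∀ (i : ℕ) (hi : i + 1 < n) (f : MvPolynomial (Fin n) k),
              D i hi (X (⟨i, by omega⟩ : Fin n) * f)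
                  - X (⟨i + 1, hi⟩ : Fin n) * D i hi f = f) := by
  constructor
  · intro i hi
    have hpq : (⟨i, by omega⟩ : Fin n) ≠ ⟨i + 1, hi⟩ := by simp only [ne_eq, Fin.mk.injEq]; omega
    refine ⟨Dem _ _ hpq, fun f => Dem_spec _ _ hpq f, ?_⟩
    intro D' hD'
    apply LinearMap.ext
    intro f
    apply X_sub_X_cancel hpq
    rw [hD' f, Dem_spec]
  · intro D hD
    refine ⟨?_, ?_, ?_, ?_⟩
    · -- ∂² = 0
      intro i hi f
      have hpq : (⟨i, by omega⟩ : Fin n) ≠ ⟨i + 1, hi⟩ := by simp only [ne_eq, Fin.mk.injEq]; omega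
      apply X_sub_X_cancel hpq
      rw [hD i hi (D i hi f), sfix hpq (D i hi) (hD i hi) f, mul_zero, sub_self]
    · -- distant commutation
      intro i j hi hj hij f
      exact comm_ops (by simp only [ne_eq, Fin.mk.injEq]; omega) (by simp only [ne_eq, Fin.mk.injEq]; omega)
        (by simp only [ne_eq, Fin.mk.injEq]; omega) (by simp only [ne_eq, Fin.mk.injEq]; omega)
        (by simp only [ne_eq, Fin.mk.injEq]; omega) (by simp only [ne_eq, Fin.mk.injEq]; omega)
        (D i hi) (D j hj) (hD i hi) (hD j hj) f
    · -- braid relation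
      intro i h2 f
      exact braid_ops (⟨i, by omega⟩ : Fin n) (⟨i + 1, by omega⟩ : Fin n)
        (⟨i + 2, by omega⟩ : Fin n)
        (by simp only [ne_eq, Fin.mk.injEq]; omega)
        (by simp only [ne_eq, Fin.mk.injEq]; omega)
        (by simp only [ne_eq, Fin.mk.injEq]; omega)
        (D i (by omega)) (D (i + 1) (by omega))
        (hD i (by omega)) (hD (i + 1) (by omega)) f
    · -- ∂ᵢ(xᵢ f) − xᵢ₊₁ ∂ᵢ f = f
      intro i hi f
      have hpq : (⟨i, by omega⟩ : Fin n) ≠ ⟨i + 1, hi⟩ := by simp only [ne_eq, Fin.mk.injEq]; omega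
      apply X_sub_X_cancel hpq
      have h1 := hD i hi (X (⟨i, by omega⟩ : Fin n) * f)
      simp only [map_mul, rename_X, Equiv.swap_apply_left] at h1
      have h2 := hD i hi f
      linear_combination h1 - X (⟨i + 1, hi⟩ : Fin n) * h2
end
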